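/- For every α ∈ ℕ and every integer r with α ≤ r ≤ 4α, there exist δ ∈ ℤ_p and u, u' ∈ Ũ such that |δ|_p ≤ p^{r−4α} ≤ 1 and D_α·k_δ·D_α = u·D(r, 2α−r, −2α)·u'. (One may take δ = p^{4α−r}.) -/

import Mathlib

open Matrix

/-- `D(a,b,c) = diag(p^{-a}, p^{-b}, p^{-c})` in `SL₃(ℚ_p)` (for `a+b+c=0`). -/
noncomputable def DmatP (p : ℕ) [Fact p.Prime] (a b c : ℤ) : Matrix (Fin 3) (Fin 3) ℚ_[p] :=
  Matrix.diagonal ![(p : ℚ_[p]) ^ (-a), (p : ℚ_[p]) ^ (-b), (p : ℚ_[p]) ^ (-c)]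

/-- The matrix `k_δ ∈ SL₃(ℤ_p)` for `δ ∈ ℤ_p`. -/
noncomputable def kMatP (p : ℕ) [Fact p.Prime] (δ : ℤ_[p]) : Matrix (Fin 3) (Fin 3) ℚ_[p] :=
  !![(δ : ℚ_[p]), -1, 0;
     1, 0, 0;
     0, 0, 1]

/-- The block-diagonal `(2+1)` subgroup `Ũ` of `K = SL₃(ℤ_p)`. -/
def UtildeP (p : ℕ) [Fact p.Prime] : Set (Matrix (Fin 3) (Fin 3) ℤ_[p]) :=
  {A | A.det = 1 ∧ A 0 2 = 0 ∧ A 1 2 = 0 ∧ A 2 0 = 0 ∧ A 2 1 = 0}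

/-- Lemma (non-archimedean spheres distorted): for integers `α ≤ r ≤ 4α` there are
`δ ∈ ℤ_p` with `|δ|_p ≤ p^{r-4α} ≤ 1` and `u, u' ∈ Ũ` with
`D_α k_δ D_α = u D(r, 2α-r, -2α) u'`. -/
theorem spheres_distorted_padic (p : ℕ) [Fact p.Prime] (α : ℕ) (r : ℤ)
    (hr₁ : (α : ℤ) ≤ r) (hr₂ : r ≤ 4 * (α : ℤ)) :
    ∃ δ : ℤ_[p],
      ‖δ‖ ≤ (p : ℝ) ^ (r - 4 * (α : ℤ)) ∧ (p : ℝ) ^ (r - 4 * (α : ℤ)) ≤ 1 ∧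
      ∃ u ∈ UtildeP p, ∃ u' ∈ UtildeP p,
        DmatP p (2 * α) (-α) (-α) * kMatP p δ * DmatP p (2 * α) (-α) (-α) =
          u.map ((↑) : ℤ_[p] → ℚ_[p]) *
            DmatP p r (2 * α - r) (-(2 * α)) *
            u'.map ((↑) : ℤ_[p] → ℚ_[p]) := by
  have hp1 : (1 : ℝ) < (p : ℝ) := by exact_mod_cast (Fact.out : p.Prime).one_lt
  have hp0 : ((p : ℚ_[p])) ≠ 0 := by
    exact_mod_cast (Nat.cast_ne_zero (R := ℚ_[p])).mpr (Fact.out : p.Prime).ne_zero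
  set n : ℕ := (4 * (α : ℤ) - r).toNat with hn
  set m : ℕ := (r - (α : ℤ)).toNat with hm
  have hn' : (n : ℤ) = 4 * (α : ℤ) - r := Int.toNat_of_nonneg (by omega)
  have hm' : (m : ℤ) = r - (α : ℤ) := Int.toNat_of_nonneg (by omega)
  refine ⟨(p : ℤ_[p]) ^ n, ?_, ?_, ?_⟩
  · have : ‖((p : ℤ_[p]) ^ n)‖ = (p : ℝ) ^ (-(n : ℤ)) := by
      exact PadicInt.norm_p_pow n
    rw [this]
    apply le_of_eq
    congr 1
    omega
  · apply zpow_le_one_of_nonpos₀ (le_of_lt hp1)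
    omega
  · refine ⟨!![1, 0, 0; (p : ℤ_[p]) ^ m, 1, 0; 0, 0, 1], ?_,
      !![1, -(p : ℤ_[p]) ^ m, 0; 0, 1, 0; 0, 0, 1], ?_, ?_⟩
    · refine ⟨?_, ?_, ?_, ?_, ?_⟩ <;>
        simp [Matrix.det_fin_three, Matrix.vecHead, Matrix.vecTail]
    · refine ⟨?_, ?_, ?_, ?_, ?_⟩ <;>
        simp [Matrix.det_fin_three, Matrix.vecHead, Matrix.vecTail]
    · have hcast : ∀ k : ℕ, (((p : ℤ_[p]) ^ k : ℤ_[p]) : ℚ_[p]) = (p : ℚ_[p]) ^ (k : ℤ) := by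
        intro k; push_cast; rw [zpow_natCast]
      have e1 : (!![1, 0, 0; (p : ℤ_[p]) ^ m, 1, 0; 0, 0, 1] : Matrix (Fin 3) (Fin 3) ℤ_[p]).map ((↑) : ℤ_[p] → ℚ_[p]) = !![1, 0, 0; (p : ℚ_[p]) ^ (m : ℤ), 1, 0; 0, 0, 1] := by
        ext i j; simp only [Matrix.map, Matrix.of_apply]; fin_cases i <;> fin_cases j <;> simp [hcast]
      have e2 : (!![1, -(p : ℤ_[p]) ^ m, 0; 0, 1, 0; 0, 0, 1] : Matrix (Fin 3) (Fin 3) ℤ_[p]).map ((↑) : ℤ_[p] → ℚ_[p]) = !![1, -(p : ℚ_[p]) ^ (m : ℤ), 0; 0, 1, 0; 0, 0, 1] := by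
        ext i j; simp only [Matrix.map, Matrix.of_apply]; fin_cases i <;> fin_cases j <;> simp [hcast]
      rw [e1, e2]
      ext i j
      fin_cases i <;> fin_cases j
      all_goals
        simp [DmatP, kMatP, Matrix.mul_apply, Fin.sum_univ_three, Matrix.diagonal,
          hcast, Matrix.map_apply, Matrix.vecHead, Matrix.vecTail]
      all_goals
        try simp only [← zpow_natCast (p : ℚ_[p]), ← _root_.zpow_neg, ← zpow_add₀ hp0]
      all_goals
        first
          | rfl
          | (congr 1; omega)
          | (rw [eq_comm, neg_add_eq_zero]; congr 1; omega)
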